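/- Suppose X and Z are Banach spaces, Y is a closed subspace of X, and for some constant C ≥ 1 every C¹ smooth Lipschitz mapping f : Y → Z extends to a C¹ smooth Lipschitz mapping F : X → Z with Lip(F) ≤ C·Lip(f). Then for every bounded linear operator T : Y → Z there exists a bounded linear operator T̃ : X → Z with T̃|_Y = T and ‖T̃‖ ≤ C‖T‖. -/

import Mathlib

/-- If every `C¹` smooth Lipschitz mapping `f : Y → Z` defined on a closed subspace `Y ⊆ X`
extends to a `C¹` smooth Lipschitz mapping `F : X → Z` with `Lip(F) ≤ C·Lip(f)`, then every
bounded linear operator `T : Y → Z` extends to a bounded linear operator `T̃ : X → Z` with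
`‖T̃‖ ≤ C‖T‖`. -/
theorem linear_extension_of_smooth_lipschitz_extension
    {X Z : Type*} [NormedAddCommGroup X] [NormedSpace ℝ X] [CompleteSpace X]
    [NormedAddCommGroup Z] [NormedSpace ℝ Z] [CompleteSpace Z]
    (Y : Subspace ℝ X) (hY : IsClosed (Y : Set X))
    (C : ℝ) (hC : 1 ≤ C)
    (hext : ∀ (f : ↥Y → Z) (L : ℝ), 0 ≤ L → ContDiff ℝ 1 f →
      (∀ a b : ↥Y, ‖f a - f b‖ ≤ L * ‖a - b‖) →
      ∃ F : X → Z, ContDiff ℝ 1 F ∧ (∀ y : ↥Y, F (y : X) = f y) ∧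
        ∀ x y : X, ‖F x - F y‖ ≤ C * L * ‖x - y‖) :
    ∀ T : ↥Y →L[ℝ] Z, ∃ T' : X →L[ℝ] Z,
      (∀ y : ↥Y, T' (y : X) = T y) ∧ ‖T'‖ ≤ C * ‖T‖ := by
  intro T
  obtain ⟨F, hFsm, hFext, hFlip⟩ := hext (fun y => T y) ‖T‖ (norm_nonneg T)
    (T.contDiff) (fun a b => by
      calc ‖T a - T b‖ = ‖T (a - b)‖ := by rw [map_sub]
        _ ≤ ‖T‖ * ‖a - b‖ := T.le_opNorm _)
  have hCL : 0 ≤ C * ‖T‖ := mul_nonneg (le_trans zero_le_one hC) (norm_nonneg T)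
  have hF0 : HasFDerivAt F (fderiv ℝ F 0) 0 :=
    ((hFsm.differentiable one_ne_zero) 0).hasFDerivAt
  have hlip : LipschitzWith (Real.toNNReal (C * ‖T‖)) F := by
    apply LipschitzWith.of_dist_le_mul
    intro x y
    rw [dist_eq_norm, dist_eq_norm, Real.coe_toNNReal _ hCL]
    exact hFlip x y
  refine ⟨fderiv ℝ F 0, ?_, ?_⟩
  · -- restriction
    have hcomp : HasFDerivAt (F ∘ Y.subtypeL) ((fderiv ℝ F 0).comp Y.subtypeL) 0 := by
      have h0 : (Y.subtypeL : ↥Y →L[ℝ] X) 0 = 0 := map_zero _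
      have := hF0.comp (0 : ↥Y) (Y.subtypeL.hasFDerivAt (x := 0))
      simpa [h0] using this
    have heq : (F ∘ Y.subtypeL) = fun y : ↥Y => T y := by
      funext y; exact hFext y
    rw [heq] at hcomp
    have hT : HasFDerivAt (fun y : ↥Y => T y) T 0 := T.hasFDerivAt
    have huniq : (fderiv ℝ F 0).comp Y.subtypeL = T := hcomp.unique hT
    intro y
    have := congrArg (fun (S : ↥Y →L[ℝ] Z) => S y) huniq
    simpa using this
  · have := hF0.le_of_lipschitz hlip
    rwa [Real.coe_toNNReal _ hCL] at this
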